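/- Fix a real number $q$ with $0 < q < 1$. For every integer $N$, the kernel of $T_N : V_N \to V_{N-2}$ and the cokernel $V_{N-2}/\mathrm{Im}\, T_N$ are both finite-dimensional over $\mathbb{C}$, and $\dim_{\mathbb{C}} \mathrm{Ker}\, T_N - \dim_{\mathbb{C}} (V_{N-2}/\mathrm{Im}\, T_N) = 1 - N$. -/

import Mathlib

/-- The `q`-integer `[n] = (qⁿ - q⁻ⁿ)/(q - q⁻¹)`. -/
noncomputable def qint (q : ℝ) (n : ℤ) : ℝ :=
  (q ^ n - q ^ (-n)) / (q - q⁻¹)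

/-- The index set `S_N = {(a,b) : a ≥ |N|, a ≡ N (mod 2), |b| ≤ a, b ≡ a (mod 2)}`. -/
def SN (N : ℤ) : Set (ℤ × ℤ) :=
  {p | |N| ≤ p.1 ∧ p.1 % 2 = N % 2 ∧ |p.2| ≤ p.1 ∧ p.2 % 2 = p.1 % 2}

/-- `V_N`: the `ℂ`-vector space of finitely supported functions on `S_N`, with standard
basis `(e_{a,b})`. -/
abbrev VN (N : ℤ) : Type :=
  SN N →₀ ℂ

/-- The coefficient `√([ (a-N)/2 + 1 ] [ (a+N)/2 ])` of the Dolbeault operator. -/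
noncomputable def coeffT (q : ℝ) (N : ℤ) (p : ℤ × ℤ) : ℝ :=
  Real.sqrt (qint q ((p.1 - N) / 2 + 1) * qint q ((p.1 + N) / 2))

/-- The anti-holomorphic Dolbeault operator `T_N : V_N → V_{N-2}`,
`T_N e_{a,b} = √([ (a-N)/2 + 1 ] [ (a+N)/2 ]) e_{a,b}` if `(a,b) ∈ S_{N-2}`, and `0`
otherwise. -/
noncomputable def TN (q : ℝ) (N : ℤ) : VN N →ₗ[ℂ] VN (N - 2) :=
  Finsupp.lsum ℂ fun p : SN N =>
    letI := Classical.dec ((p : ℤ × ℤ) ∈ SN (N - 2))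
    if h : (p : ℤ × ℤ) ∈ SN (N - 2) then
      ((coeffT q N p : ℝ) : ℂ) • Finsupp.lsingle (⟨(p : ℤ × ℤ), h⟩ : SN (N - 2))
    else 0


lemma qint_pos {q : ℝ} (hq0 : 0 < q) (hq1 : q < 1) {n : ℤ} (hn : 0 < n) : 0 < qint q n := by
  unfold qint
  apply div_pos_of_neg_of_neg
  · have h : q ^ n < q ^ (-n) := zpow_lt_zpow_right_of_lt_one₀ hq0 hq1 (by omega)
    linarith
  · have h1 : 1 < q⁻¹ := (one_lt_inv₀ hq0).mpr hq1
    linarith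

lemma mem_SN' {N : ℤ} {p : ℤ × ℤ} :
    p ∈ SN N ↔ (-p.1 ≤ N ∧ N ≤ p.1) ∧ p.1 % 2 = N % 2 ∧ (-p.1 ≤ p.2 ∧ p.2 ≤ p.1) ∧
      p.2 % 2 = p.1 % 2 := by
  simp only [SN, Set.mem_setOf_eq, abs_le]

lemma mem_SN_sub_two {N : ℤ} {p : ℤ × ℤ} (hp : p ∈ SN N) : p ∈ SN (N - 2) ↔ p.1 ≠ -N := by
  rw [mem_SN'] at hp ⊢; omega

lemma coeffT_pos {q : ℝ} (hq0 : 0 < q) (hq1 : q < 1) {N : ℤ} {p : ℤ × ℤ}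
    (hp : p ∈ SN N) (h : p.1 ≠ -N) : 0 < coeffT q N p := by
  rw [mem_SN'] at hp
  have h1 : 0 < (p.1 - N) / 2 + 1 := by omega
  have h2 : 0 < (p.1 + N) / 2 := by omega
  exact Real.sqrt_pos.mpr (mul_pos (qint_pos hq0 hq1 h1) (qint_pos hq0 hq1 h2))

lemma TN_apply_of_mem (q : ℝ) (N : ℤ) (f : VN N) (r : SN (N - 2))
    (h : (r : ℤ × ℤ) ∈ SN N) :
    (TN q N f) r = ((coeffT q N r : ℝ) : ℂ) * f ⟨(r : ℤ × ℤ), h⟩ := by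
  rw [TN, Finsupp.lsum_apply, Finsupp.sum_apply]
  rw [Finsupp.sum_eq_single (⟨(r : ℤ × ℤ), h⟩ : SN N)]
  · rw [dif_pos r.2]
    simp
  · intro p hp hne
    split
    · rename_i hp2
      simp only [LinearMap.smul_apply, Finsupp.lsingle_apply, Finsupp.smul_apply]
      rw [Finsupp.single_eq_of_ne', smul_zero]
      intro hc
      have hv : (p : ℤ × ℤ) = (r : ℤ × ℤ) := congrArg Subtype.val hc
      exact hne (Subtype.ext hv)
    · simp
  · intro h0
    split <;> simp [h0]

lemma TN_apply_of_not_mem (q : ℝ) (N : ℤ) (f : VN N) (r : SN (N - 2))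
    (h : (r : ℤ × ℤ) ∉ SN N) :
    (TN q N f) r = 0 := by
  rw [TN, Finsupp.lsum_apply, Finsupp.sum_apply]
  apply Finset.sum_eq_zero
  intro p _
  beta_reduce
  split
  · rename_i hp2
    simp only [LinearMap.smul_apply, Finsupp.lsingle_apply, Finsupp.smul_apply]
    rw [Finsupp.single_eq_of_ne', smul_zero]
    intro hc
    have hv : (p : ℤ × ℤ) = (r : ℤ × ℤ) := congrArg Subtype.val hc
    exact h (hv ▸ p.2)
  · simp

lemma TN_single (q : ℝ) (N : ℤ) (p : SN N) (c : ℂ) (h : (p : ℤ × ℤ) ∈ SN (N - 2)) :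
    TN q N (Finsupp.single p c)
      = ((coeffT q N p : ℝ) : ℂ) • Finsupp.single (⟨(p : ℤ × ℤ), h⟩ : SN (N - 2)) c := by
  rw [TN, Finsupp.lsum_single, dif_pos h]
  simp

lemma ker_TN {q : ℝ} (hq0 : 0 < q) (hq1 : q < 1) (N : ℤ) :
    LinearMap.ker (TN q N)
      = Finsupp.supported ℂ ℂ {p : SN N | (p : ℤ × ℤ).1 = -N} := by
  ext f
  rw [LinearMap.mem_ker, Finsupp.mem_supported]
  constructor
  · intro hf p hp
    rw [Finset.mem_coe, Finsupp.mem_support_iff] at hp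
    by_contra hne
    have hmem : (p : ℤ × ℤ) ∈ SN (N - 2) := (mem_SN_sub_two p.2).mpr hne
    have h0 : (TN q N f) ⟨(p : ℤ × ℤ), hmem⟩ = 0 := by rw [hf]; rfl
    rw [TN_apply_of_mem q N f ⟨(p : ℤ × ℤ), hmem⟩ p.2] at h0
    have hc : coeffT q N (p : ℤ × ℤ) ≠ 0 := ne_of_gt (coeffT_pos hq0 hq1 p.2 hne)
    rcases mul_eq_zero.mp h0 with h | h
    · exact hc (by exact_mod_cast h)
    · exact hp h
  · intro hf
    ext r
    by_cases h : (r : ℤ × ℤ) ∈ SN N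
    · rw [TN_apply_of_mem q N f r h]
      have hzero : f ⟨(r : ℤ × ℤ), h⟩ = 0 := by
        by_contra hne
        have := hf (Finset.mem_coe.mpr (Finsupp.mem_support_iff.mpr hne))
        simp only [Set.mem_setOf_eq] at this
        exact (mem_SN_sub_two h).mp r.2 this
      simp [hzero]
    · rw [TN_apply_of_not_mem q N f r h]
      rfl

lemma range_TN {q : ℝ} (hq0 : 0 < q) (hq1 : q < 1) (N : ℤ) :
    LinearMap.range (TN q N)
      = Finsupp.supported ℂ ℂ {r : SN (N - 2) | (r : ℤ × ℤ) ∈ SN N} := by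
  apply le_antisymm
  · rintro _ ⟨f, rfl⟩
    rw [Finsupp.mem_supported]
    intro r hr
    rw [Finset.mem_coe, Finsupp.mem_support_iff] at hr
    by_contra h
    exact hr (TN_apply_of_not_mem q N f r h)
  · rw [Finsupp.supported_eq_span_single, Submodule.span_le]
    rintro _ ⟨r, hr, rfl⟩
    simp only [Set.mem_setOf_eq] at hr
    have hne : (r : ℤ × ℤ).1 ≠ -N := (mem_SN_sub_two hr).mp r.2
    have hc : coeffT q N (r : ℤ × ℤ) ≠ 0 := ne_of_gt (coeffT_pos hq0 hq1 hr hne)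
    refine ⟨(((coeffT q N (r : ℤ × ℤ) : ℝ) : ℂ))⁻¹ • Finsupp.single (⟨(r : ℤ × ℤ), hr⟩ : SN N) 1, ?_⟩
    rw [map_smul, TN_single q N _ _ r.2, smul_smul, inv_mul_cancel₀ (by exact_mod_cast hc), one_smul]

def kerFinEquiv (N : ℤ) :
    ↥{p : SN N | (p : ℤ × ℤ).1 = -N} ≃ Fin (1 - N).toNat where
  toFun p := ⟨((-N - ((p : SN N) : ℤ × ℤ).2) / 2).toNat, by
    have hm := (p : SN N).2
    have ha := p.2
    simp only [Set.mem_setOf_eq] at ha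
    rw [mem_SN'] at hm
    omega⟩
  invFun k := ⟨⟨(-N, -N - 2 * (k : ℕ)), by
    have hk := k.2
    rw [mem_SN']
    dsimp only
    omega⟩, by simp⟩
  left_inv p := by
    have hm := (p : SN N).2
    have ha := p.2
    simp only [Set.mem_setOf_eq] at ha
    rw [mem_SN'] at hm
    apply Subtype.ext
    apply Subtype.ext
    rw [Prod.ext_iff]
    constructor
    · simp only
      omega
    · simp only
      omega
  right_inv k := by
    apply Fin.ext
    dsimp only
    omega

def cokerFinEquiv (N : ℤ) :
    ↥({r : SN (N - 2) | (r : ℤ × ℤ) ∈ SN N}ᶜ) ≃ Fin (N - 1).toNat where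
  toFun r := ⟨((N - 2 - ((r : SN (N - 2)) : ℤ × ℤ).2) / 2).toNat, by
    have hm := (r : SN (N - 2)).2
    have ha := r.2
    simp only [Set.mem_compl_iff, Set.mem_setOf_eq] at ha
    rw [mem_SN'] at hm ha
    omega⟩
  invFun k := ⟨⟨(N - 2, N - 2 - 2 * (k : ℕ)), by
    have hk := k.2
    rw [mem_SN']
    dsimp only
    omega⟩, by
    have hk := k.2
    simp only [Set.mem_compl_iff, Set.mem_setOf_eq]
    rw [mem_SN']
    dsimp only
    omega⟩
  left_inv r := by
    have hm := (r : SN (N - 2)).2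
    have ha := r.2
    simp only [Set.mem_compl_iff, Set.mem_setOf_eq] at ha
    rw [mem_SN'] at hm ha
    apply Subtype.ext
    apply Subtype.ext
    rw [Prod.ext_iff]
    constructor
    · simp only
      omega
    · simp only
      omega
  right_inv k := by
    apply Fin.ext
    dsimp only
    omega

lemma supported_stats {α : Type*} (s : Set α) {n : ℕ} (e : ↥s ≃ Fin n) :
    FiniteDimensional ℂ (Finsupp.supported ℂ ℂ s) ∧
      Module.finrank ℂ (Finsupp.supported ℂ ℂ s) = n := by
  have E : ↥(Finsupp.supported ℂ ℂ s) ≃ₗ[ℂ] (Fin n → ℂ) :=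
    (Finsupp.supportedEquivFinsupp s).trans
      ((Finsupp.domLCongr e).trans (Finsupp.linearEquivFunOnFinite ℂ ℂ (Fin n)))
  constructor
  · exact Module.Finite.equiv E.symm
  · rw [E.finrank_eq, Module.finrank_fin_fun]

lemma quot_stats {α : Type*} (s : Set α) {n : ℕ} (e : ↥(sᶜ) ≃ Fin n) :
    FiniteDimensional ℂ ((α →₀ ℂ) ⧸ Finsupp.supported ℂ ℂ s) ∧
      Module.finrank ℂ ((α →₀ ℂ) ⧸ Finsupp.supported ℂ ℂ s) = n := by
  have hcompl : IsCompl (Finsupp.supported ℂ ℂ s) (Finsupp.supported ℂ ℂ sᶜ) :=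
    ⟨Finsupp.disjoint_supported_supported disjoint_compl_right, by
      rw [codisjoint_iff, ← Finsupp.supported_union, Set.union_compl_self,
        Finsupp.supported_univ]⟩
  have E := Submodule.quotientEquivOfIsCompl _ _ hcompl
  obtain ⟨h1, h2⟩ := supported_stats (sᶜ) e
  refine ⟨?_, E.finrank_eq.trans h2⟩
  haveI := h1
  exact Module.Finite.equiv E.symm

/-- for `0 < q < 1` and every integer `N`, the kernel and cokernel of
`T_N : V_N → V_{N-2}` are finite-dimensional over `ℂ` and
`dim Ker T_N - dim (V_{N-2}/Im T_N) = 1 - N` (the holomorphic Euler characteristic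
`χ(ℂP¹_q, L_N) = -N + 1`). -/
theorem stmt10 (q : ℝ) (hq0 : 0 < q) (hq1 : q < 1) (N : ℤ) :
    FiniteDimensional ℂ (LinearMap.ker (TN q N)) ∧
    FiniteDimensional ℂ (VN (N - 2) ⧸ LinearMap.range (TN q N)) ∧
    (Module.finrank ℂ (LinearMap.ker (TN q N)) : ℤ) -
      (Module.finrank ℂ (VN (N - 2) ⧸ LinearMap.range (TN q N)) : ℤ) = 1 - N := by
  obtain ⟨hk1, hk2⟩ := supported_stats {p : SN N | (p : ℤ × ℤ).1 = -N} (kerFinEquiv N)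
  obtain ⟨hq1', hq2'⟩ :=
    quot_stats {r : SN (N - 2) | (r : ℤ × ℤ) ∈ SN N} (cokerFinEquiv N)
  rw [ker_TN hq0 hq1 N, range_TN hq0 hq1 N]
  refine ⟨hk1, hq1', ?_⟩
  rw [hk2, hq2']
  omega
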